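/- arXiv:2302.03260 — 6 statements merged into one kernel-verified Lean document; each statement's English description precedes it below -/
import Mathlib

section
/- Let G = Z₂ × Z₄ and θ a normalized orthomorphism of G. Define A₄₄ = {x ∈ G : o(x)=4 and o(θ(x))=4}, A₄₂ = {x : o(x)=4, o(θ(x))=2}, A₂₄ = {x : o(x)=2, o(θ(x))=4}, A₂₂ = {x : o(x)=2, o(θ(x))=2}. Then |A₄₄| = |A₄₂| = |A₂₄| = 2 and |A₂₂| = 1. -/
/-- The group `ℤ₂ × ℤ₄` (written additively). -/
abbrev G24 : Type := ZMod 2 × ZMod 4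

/-- A normalized orthomorphism: a bijection fixing the identity whose associated
complete mapping `x ↦ -x + θ x` (i.e. `x⁻¹θ(x)` in additive notation) is a bijection. -/
def IsNormOrtho (θ : G24 → G24) : Prop :=
  Function.Bijective θ ∧ θ 0 = 0 ∧ Function.Bijective (fun x => -x + θ x)

/-- Orthogonality of orthomorphisms: `x ↦ θ₁(x)⁻¹θ₂(x)` is a bijection. -/
def Orthogonal (θ₁ θ₂ : G24 → G24) : Prop :=
  Function.Bijective (fun x => -θ₁ x + θ₂ x)

/-- `A i j θ = {x : order of x is i and order of θ(x) is j}`. -/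
def A (i j : ℕ) (θ : G24 → G24) : Set G24 :=
  {x | addOrderOf x = i ∧ addOrderOf (θ x) = j}

open Finset

lemma ordZ4 : ∀ b : ZMod 4, addOrderOf b = if b = 0 then 1 else if b = 2 then 2 else 4 := by
  have hz1 : addOrderOf (1 : ZMod 4) = 4 := ZMod.addOrderOf_one 4
  have hz2 : addOrderOf (2 : ZMod 4) = 2 := by
    have := ZMod.addOrderOf_coe 2 (n := 4) (by norm_num)
    norm_num at this; exact_mod_cast this
  have hz3 : addOrderOf (3 : ZMod 4) = 4 := by
    have := ZMod.addOrderOf_coe 3 (n := 4) (by norm_num)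
    norm_num at this; exact_mod_cast this
  intro b
  fin_cases b
  · show addOrderOf (0 : ZMod 4) = _; rw [addOrderOf_zero]; decide
  · show addOrderOf (1 : ZMod 4) = _; simp [hz1]; decide
  · show addOrderOf (2 : ZMod 4) = _; rw [hz2]; decide
  · show addOrderOf (3 : ZMod 4) = _; simp [hz3]; decide

lemma ordZ2 : ∀ a : ZMod 2, addOrderOf a = if a = 0 then 1 else 2 := by
  intro a
  fin_cases a
  · show addOrderOf (0 : ZMod 2) = _; rw [addOrderOf_zero]; decide
  · have : (⟨1, by norm_num⟩ : Fin 2) = (1 : ZMod 2) := rfl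
    rw [this, ZMod.addOrderOf_one]
    simp

/-- predicate for order 4 -/
def P (x : G24) : Prop := x.2 = 1 ∨ x.2 = 3

instance : DecidablePred P := fun x => by unfold P; infer_instance

lemma ordG (x : G24) :
    addOrderOf x = if x = 0 then 1 else if P x then 4 else 2 := by
  obtain ⟨a, b⟩ := x
  rw [Prod.addOrderOf]
  simp only [ordZ2 a, ordZ4 b]
  fin_cases a <;> fin_cases b <;> simp [P] <;> decide

lemma ord4_iff (x : G24) : addOrderOf x = 4 ↔ P x := by
  rw [ordG]
  split_ifs with h1 h2
  · subst h1; simp only [P]; norm_num; decide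
  · simp [h2]
  · simp [h2]

lemma ord2_iff (x : G24) : addOrderOf x = 2 ↔ (x ≠ 0 ∧ ¬ P x) := by
  rw [ordG]
  split_ifs with h1 h2 <;> simp_all

lemma card_comp (e : G24 ≃ G24) (Q : G24 → Prop) [DecidablePred Q] :
    (univ.filter (fun x => Q (e x))).card = (univ.filter Q).card := by
  apply Finset.card_bij' (fun x _ => e x) (fun y _ => e.symm y) <;> simp

lemma split (p q : G24 → Prop) [DecidablePred p] [DecidablePred q] :
    (univ.filter fun x => p x ∧ q x).card + (univ.filter fun x => p x ∧ ¬ q x).card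
      = (univ.filter fun x => p x).card := by
  rw [← Finset.filter_filter, ← Finset.filter_filter]
  exact Finset.card_filter_add_card_filter_not _

lemma split' (p q : G24 → Prop) [DecidablePred p] [DecidablePred q] :
    (univ.filter fun x => p x ∧ q x).card + (univ.filter fun x => ¬ p x ∧ q x).card
      = (univ.filter fun x => q x).card := by
  have h1 := split q p
  have e1 : (univ.filter fun x => q x ∧ p x) = (univ.filter fun x => p x ∧ q x) :=
    Finset.filter_congr (by intro x _; by_cases h1 : p x <;> by_cases h2 : q x <;> simp [h1, h2])
  have e2 : (univ.filter fun x => q x ∧ ¬ p x) = (univ.filter fun x => ¬ p x ∧ q x) :=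
    Finset.filter_congr (by intro x _; by_cases h1 : p x <;> by_cases h2 : q x <;> simp [h1, h2])
  rw [e1, e2] at h1
  exact h1

lemma set_eq_coe (p : G24 → Prop) [DecidablePred p] :
    ({x | p x} : Set G24) = ↑(univ.filter p) := by
  ext x; simp

theorem card_A_partition (θ : G24 → G24) (hθ : IsNormOrtho θ) :
    (A 4 4 θ).ncard = 2 ∧ (A 4 2 θ).ncard = 2 ∧ (A 2 4 θ).ncard = 2 ∧
      (A 2 2 θ).ncard = 1 := by
  obtain ⟨hbij, h0, hη⟩ := hθ
  have hinj := hbij.injective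
  have hne : ∀ x : G24, x ≠ 0 → θ x ≠ 0 := by
    intro x hx h
    exact hx (hinj (h.trans h0.symm))
  have hP0 : ¬ P (0 : G24) := by decide
  have hPne : ∀ x : G24, P x → x ≠ 0 := by decide
  -- rewrite the four sets
  have e44 : A 4 4 θ = {x | P x ∧ P (θ x)} := by
    ext x; simp only [A, Set.mem_setOf_eq, ord4_iff]
  have e42 : A 4 2 θ = {x | P x ∧ ¬ P (θ x)} := by
    ext x
    simp only [A, Set.mem_setOf_eq, ord4_iff, ord2_iff]
    constructor
    · rintro ⟨h1, _, h3⟩; exact ⟨h1, h3⟩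
    · rintro ⟨h1, h2⟩; exact ⟨h1, hne x (hPne x h1), h2⟩
  have e24 : A 2 4 θ = {x | ¬ P x ∧ P (θ x)} := by
    ext x
    simp only [A, Set.mem_setOf_eq, ord4_iff, ord2_iff]
    constructor
    · rintro ⟨⟨_, h2⟩, h3⟩; exact ⟨h2, h3⟩
    · rintro ⟨h1, h2⟩
      refine ⟨⟨?_, h1⟩, h2⟩
      intro hx0
      exact hP0 (by rwa [hx0, h0] at h2)
  have e22 : A 2 2 θ = {x | ¬ (x = 0) ∧ ¬ P x ∧ ¬ P (θ x)} := by
    ext x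
    simp only [A, Set.mem_setOf_eq, ord2_iff]
    constructor
    · rintro ⟨⟨h1, h2⟩, _, h4⟩; exact ⟨h1, h2, h4⟩
    · rintro ⟨h1, h2, h3⟩; exact ⟨⟨h1, h2⟩, hne x h1, h3⟩
  -- cards
  have c44 : (A 4 4 θ).ncard = (univ.filter fun x => P x ∧ P (θ x)).card := by
    rw [e44, set_eq_coe, Set.ncard_coe_finset]
  have c42 : (A 4 2 θ).ncard = (univ.filter fun x => P x ∧ ¬ P (θ x)).card := by
    rw [e42, set_eq_coe, Set.ncard_coe_finset]
  have c24 : (A 2 4 θ).ncard = (univ.filter fun x => ¬ P x ∧ P (θ x)).card := by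
    rw [e24, set_eq_coe, Set.ncard_coe_finset]
  have c22 : (A 2 2 θ).ncard =
      (univ.filter fun x => ¬ (x = 0) ∧ ¬ P x ∧ ¬ P (θ x)).card := by
    rw [e22, set_eq_coe, Set.ncard_coe_finset]
  have cardP : (univ.filter fun x : G24 => P x).card = 4 := by decide
  have cardnP : (univ.filter fun x : G24 => ¬ P x).card = 4 := by decide
  -- (i)
  have eq1 := split P (fun x => P (θ x))
  rw [cardP] at eq1
  -- (ii)
  have hcompθ : (univ.filter fun x => P (θ x)).card = 4 := by
    have := card_comp (Equiv.ofBijective θ hbij) P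
    rw [cardP] at this
    exact this
  have eq2 := split' P (fun x => P (θ x))
  rw [hcompθ] at eq2
  -- (iii)
  have eqXOR : ∀ x y : G24, P (-x + y) ↔ ¬ (P x ↔ P y) := by decide
  have hcompη : (univ.filter fun x => ¬ (P x ↔ P (θ x))).card = 4 := by
    have h1 : (univ.filter fun x => P (-x + θ x)).card = 4 := by
      have := card_comp (Equiv.ofBijective _ hη) P
      rw [cardP] at this
      exact this
    have h2 : (univ.filter fun x => P (-x + θ x))
        = (univ.filter fun x => ¬ (P x ↔ P (θ x))) :=
      Finset.filter_congr (fun x _ => by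
        simpa using (eqXOR x (θ x)))
    rw [h2] at h1
    exact h1
  have eq3a : (univ.filter fun x => (¬ (P x ↔ P (θ x))) ∧ P x).card
      = (univ.filter fun x => P x ∧ ¬ P (θ x)).card := by
    congr 1
    exact Finset.filter_congr (by intro x _; by_cases h1 : P x <;> by_cases h2 : P (θ x) <;> simp [h1, h2])
  have eq3b : (univ.filter fun x => (¬ (P x ↔ P (θ x))) ∧ ¬ P x).card
      = (univ.filter fun x => ¬ P x ∧ P (θ x)).card := by
    congr 1
    exact Finset.filter_congr (by intro x _; by_cases h1 : P x <;> by_cases h2 : P (θ x) <;> simp [h1, h2])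
  have eq3 := split (fun x => ¬ (P x ↔ P (θ x))) P
  rw [hcompη, eq3a, eq3b] at eq3
  -- (iv)
  have eq4 := split' (fun x => P (θ x)) (fun x => ¬ P x)
  rw [cardnP] at eq4
  have eq4a : (univ.filter fun x => P (θ x) ∧ ¬ P x).card
      = (univ.filter fun x => ¬ P x ∧ P (θ x)).card := by
    congr 1
    exact Finset.filter_congr (by intro x _; by_cases h1 : P x <;> by_cases h2 : P (θ x) <;> simp [h1, h2])
  have eq4b : (univ.filter fun x => ¬ P (θ x) ∧ ¬ P x).card
      = (univ.filter fun x => ¬ P x ∧ ¬ P (θ x)).card := by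
    congr 1
    exact Finset.filter_congr (by intro x _; by_cases h1 : P x <;> by_cases h2 : P (θ x) <;> simp [h1, h2])
  rw [eq4a, eq4b] at eq4
  -- split off zero
  have eq5 := split' (fun x : G24 => x = 0) (fun x => ¬ P x ∧ ¬ P (θ x))
  have eq5a : (univ.filter fun x : G24 => x = 0 ∧ ¬ P x ∧ ¬ P (θ x)).card = 1 := by
    have : (univ.filter fun x : G24 => x = 0 ∧ ¬ P x ∧ ¬ P (θ x)) = {(0 : G24)} := by
      ext x
      simp only [Finset.mem_filter, Finset.mem_univ, true_and, Finset.mem_singleton]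
      constructor
      · rintro ⟨h, _⟩; exact h
      · rintro rfl; exact ⟨rfl, hP0, by rw [h0]; exact hP0⟩
    rw [this]
    rfl
  rw [eq5a] at eq5
  rw [c44, c42, c24, c22]
  refine ⟨?_, ?_, ?_, ?_⟩ <;> omega
end

section
/- Let G = Z₂ × Z₄ and θ a normalized orthomorphism of G with sets A₄₄, A₄₂, A₂₄, A₂₂ as defined by the orders of x and θ(x). Then |A₄₄ ∩ θ(A₄₄)| = |A₄₄ ∩ θ(A₂₄)| = |A₄₂ ∩ θ(A₄₄)| = |A₄₂ ∩ θ(A₂₄)| = 1. -/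
/-! ### Auxiliary machinery for a finite verification -/

/-- Computable order function on `G24`. -/
def ord (x : G24) : ℕ := if x = 0 then 1 else if 2 • x = 0 then 2 else 4

theorem ord_eq : ∀ x : G24, addOrderOf x = ord x := by
  intro x
  rcases x with ⟨a, b⟩
  fin_cases a <;> fin_cases b <;>
    simp only [ord] <;>
    first
      | (norm_num; exact addOrderOf_eq_one_iff.2 rfl)
      | (rw [addOrderOf_eq_iff (by decide)]; decide)

/-- Finset version of `A`. -/
def B (i j : ℕ) (θ : G24 → G24) : Finset G24 :=
  Finset.univ.filter (fun x => ord x = i ∧ ord (θ x) = j)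

/-- The decidable conclusion. -/
def chk (θ : G24 → G24) : Prop :=
  (B 4 4 θ ∩ (B 4 4 θ).image θ).card = 1 ∧ (B 4 4 θ ∩ (B 2 4 θ).image θ).card = 1 ∧
  (B 4 2 θ ∩ (B 4 4 θ).image θ).card = 1 ∧ (B 4 2 θ ∩ (B 2 4 θ).image θ).card = 1

instance : DecidablePred chk := fun θ => by unfold chk; infer_instance

/-- The nonzero elements of `G24`. -/
def nz : List G24 := [(0,1),(0,2),(0,3),(1,0),(1,1),(1,2),(1,3)]

/-- All elements of `G24`. -/
def allG : List G24 := (0,0) :: nz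

/-- Recover a function on `G24` from the list of images of `nz`. -/
def f (p : List G24) : G24 → G24 := fun x => p.getD (nz.idxOf x) 0

def ins (a : G24) : List G24 → List (List G24)
  | [] => [[a]]
  | b :: l => (a :: b :: l) :: (ins a l).map (b :: ·)

def perms : List G24 → List (List G24)
  | [] => [[]]
  | a :: l => (perms l).flatMap (ins a)

def nodupb : List G24 → Bool
  | [] => true
  | a :: l => !(l.contains a) && nodupb l

theorem nodupb_of_nodup : ∀ l : List G24, l.Nodup → nodupb l = true := by
  intro l h
  induction l with
  | nil => rfl
  | cons a t ih =>
    rw [List.nodup_cons] at h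
    simp [nodupb, ih h.2, h.1]

theorem beq_eq : (instBEqProd : BEq G24) = instBEqOfDecidableEq :=
  @lawful_beq_subsingleton G24 instBEqProd instBEqOfDecidableEq
    (@Prod.instLawfulBEq _ _ _ _ instLawfulBEq instLawfulBEq) instLawfulBEq

theorem mem_ins (x : G24) : ∀ p : List G24, x ∈ p → p ∈ ins x (p.erase x) := by
  intro p hx
  induction p with
  | nil => simp at hx
  | cons b q ih =>
    by_cases hbx : b = x
    · subst hbx
      have he : (b :: q).erase b = q := List.erase_cons_head b q
      rw [he]
      cases q <;> simp [ins]
    · have he : (b :: q).erase x = b :: q.erase x := by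
        rw [List.erase_cons_tail (by simp [beq_iff_eq, hbx])]
      rw [he]
      have hxq : x ∈ q := by
        rcases List.mem_cons.1 hx with h | h
        · exact absurd h.symm hbx
        · exact h
      simp only [ins]
      exact List.mem_cons.2 (Or.inr (List.mem_map.2 ⟨q, ih hxq, rfl⟩))

theorem perm_mem_perms : ∀ l p : List G24, p.Perm l → p ∈ perms l := by
  intro l
  induction l with
  | nil => intro p h; simp [List.perm_nil.1 h, perms]
  | cons a t ih =>
    intro p h
    have ha : a ∈ p := h.mem_iff.2 List.mem_cons_self
    have hpe : (p.erase a).Perm t := by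
      have h2 := h.erase a
      have h3 : (a :: t).erase a = t := List.erase_cons_head a t
      rwa [h3] at h2
    simp only [perms]
    exact List.mem_flatMap.2 ⟨p.erase a, ih _ hpe, mem_ins a p ha⟩

set_option maxRecDepth 100000 in
set_option maxHeartbeats 4000000 in
theorem key : ∀ a ∈ nz, ∀ p ∈ perms (nz.erase a),
    nodupb (allG.map fun x => -x + f (a :: p) x) = true → chk (f (a :: p)) := by decide

theorem card_A_inter_image (θ : G24 → G24) (hθ : IsNormOrtho θ) :
    (A 4 4 θ ∩ θ '' A 4 4 θ).ncard = 1 ∧ (A 4 4 θ ∩ θ '' A 2 4 θ).ncard = 1 ∧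
      (A 4 2 θ ∩ θ '' A 4 4 θ).ncard = 1 ∧ (A 4 2 θ ∩ θ '' A 2 4 θ).ncard = 1 := by
  obtain ⟨hbij, h0, hcm⟩ := hθ
  have hnzmem : ∀ y : G24, y ∈ nz ↔ y ≠ 0 := by decide
  -- the list of images of `nz` under `θ` is a permutation of `nz`
  have hmapnd : (nz.map θ).Nodup := (by decide : nz.Nodup).map hbij.1
  have hperm : (nz.map θ).Perm nz := by
    apply List.perm_of_nodup_nodup_toFinset_eq hmapnd (by decide)
    ext x
    simp only [List.mem_toFinset, List.mem_map, hnzmem]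
    constructor
    · rintro ⟨y, hy, rfl⟩
      exact fun h => hy (hbij.1 (h.trans h0.symm))
    · intro hx
      obtain ⟨y, rfl⟩ := hbij.2 x
      exact ⟨y, fun h => hx (by rw [h, h0]), rfl⟩
  -- `f` recovers `θ` from this list
  have hfθ : f (nz.map θ) = θ := by
    funext x
    by_cases hx0 : x = 0
    · subst hx0
      rw [h0]
      rfl
    · have hx : x ∈ nz := (hnzmem x).2 hx0
      fin_cases hx <;> rfl
  -- apply the finite verification
  have ha : θ (0,1) ∈ nz := hperm.mem_iff.1 List.mem_cons_self
  have hp2 : (List.map θ [(0,2),(0,3),(1,0),(1,1),(1,2),(1,3)]) ∈ perms (nz.erase (θ (0,1))) := by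
    apply perm_mem_perms
    have h2 := hperm.erase (θ (0,1))
    rw [show List.map θ nz = θ (0,1) :: List.map θ [(0,2),(0,3),(1,0),(1,1),(1,2),(1,3)] from rfl]
      at h2
    have h3 : (θ (0,1) :: List.map θ [(0,2),(0,3),(1,0),(1,1),(1,2),(1,3)]).erase (θ (0,1))
        = List.map θ [(0,2),(0,3),(1,0),(1,1),(1,2),(1,3)] := List.erase_cons_head _ _
    rwa [h3] at h2
  have hnodup : nodupb (allG.map fun x =>
      -x + f (θ (0,1) :: List.map θ [(0,2),(0,3),(1,0),(1,1),(1,2),(1,3)]) x) = true := by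
    apply nodupb_of_nodup
    have : (f (θ (0,1) :: List.map θ [(0,2),(0,3),(1,0),(1,1),(1,2),(1,3)])) = θ := hfθ
    rw [this]
    exact ((by decide : allG.Nodup)).map hcm.1
  have hchk : chk θ := by
    have h := key (θ (0,1)) ha _ hp2 hnodup
    rwa [show (f (θ (0,1) :: List.map θ [(0,2),(0,3),(1,0),(1,1),(1,2),(1,3)])) = θ from hfθ] at h
  have hAB : ∀ i j, A i j θ = ↑(B i j θ) := by
    intro i j
    ext x
    simp [A, B, ord_eq]
  have himg : ∀ i j k l : ℕ,
      (A i j θ ∩ θ '' A k l θ).ncard = (B i j θ ∩ (B k l θ).image θ).card := by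
    intro i j k l
    rw [hAB, hAB, ← Finset.coe_image, ← Finset.coe_inter, Set.ncard_coe_finset]
  obtain ⟨c1, c2, c3, c4⟩ := hchk
  exact ⟨by rw [himg]; exact c1, by rw [himg]; exact c2,
    by rw [himg]; exact c3, by rw [himg]; exact c4⟩
end

section
/- Let G = Z₂ × Z₄ and θ a normalized orthomorphism of G. If A₂₂ = {x} (the unique element of order 2 mapped by θ to an element of order 2), then θ(A₄₂) = {x, x·θ(x)} and A₂₄ = {θ(x), x·θ(x)}. -/
lemma klein1 : ∀ y z : G24, y+y=0 → y≠0 → z+z=0 → z≠0 → y≠z →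
    ((y+z)+(y+z)=0 ∧ y+z≠0 ∧ y+z≠y ∧ y+z≠z) := by decide

lemma klein2 : ∀ y z t : G24,
    (y+y=0 ∧ z+z=0 ∧ t+t=0 ∧ y≠0 ∧ z≠0 ∧ t≠0 ∧ y≠z ∧ t≠z) → (t=y ∨ t=y+z) := by decide

lemma ord2_of (y : G24) (h1 : y + y = 0) (h2 : y ≠ 0) : addOrderOf y = 2 :=
  addOrderOf_eq_prime (by rw [two_nsmul]; exact h1) h2

lemma two_smul_of_ord2 (y : G24) (h : addOrderOf y = 2) : y + y = 0 := by
  have h2 := addOrderOf_nsmul_eq_zero y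
  rw [h, two_nsmul] at h2; exact h2

lemma ne_zero_of_ord2 (y : G24) (h : addOrderOf y = 2) : y ≠ 0 := by
  rintro rfl; simp at h

lemma ordcases (y : G24) : addOrderOf y = 1 ∨ addOrderOf y = 2 ∨ addOrderOf y = 4 := by
  have hd : addOrderOf y ∣ 4 := addOrderOf_dvd_of_nsmul_eq_zero (by revert y; decide)
  have h4 : addOrderOf y ≤ 4 := Nat.le_of_dvd (by norm_num) hd
  interval_cases h : addOrderOf y <;> omega

theorem image_A42_and_A24 (θ : G24 → G24) (hθ : IsNormOrtho θ) (x : G24)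
    (hx : A 2 2 θ = {x}) :
    θ '' A 4 2 θ = {x, x + θ x} ∧ A 2 4 θ = {θ x, x + θ x} := by
  obtain ⟨⟨θinj, θsurj⟩, h0, ηinj, _⟩ := hθ
  have hxm : x ∈ A 2 2 θ := by rw [hx]; rfl
  obtain ⟨hx2, ha2⟩ := hxm
  have mem22 : ∀ y : G24, addOrderOf y = 2 → addOrderOf (θ y) = 2 → y = x := by
    intro y h1 h2
    have : y ∈ A 2 2 θ := ⟨h1, h2⟩
    rwa [hx, Set.mem_singleton_iff] at this
  set a := θ x with ha
  -- basic facts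
  have hxne : x ≠ 0 := ne_zero_of_ord2 x hx2
  have hane : a ≠ 0 := ne_zero_of_ord2 a ha2
  have hxx : x + x = 0 := two_smul_of_ord2 x hx2
  have haa : a + a = 0 := two_smul_of_ord2 a ha2
  have hax : x ≠ a := by
    intro h
    have : (fun y => -y + θ y) x = (fun y => -y + θ y) 0 := by
      simp [h0, ← ha, ← h]
    exact hxne (ηinj this)
  obtain ⟨hss, hsne, hsx, hsa⟩ := klein1 x a hxx hxne haa hane hax
  have hs2 : addOrderOf (x + a) = 2 := ord2_of _ hss hsne
  -- classification: any order-2 element ≠ a is x or x+a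
  have class1 : ∀ t : G24, addOrderOf t = 2 → t ≠ a → t = x ∨ t = x + a := by
    intro t ht hta
    exact klein2 x a t ⟨hxx, haa, two_smul_of_ord2 t ht, hxne, hane,
      ne_zero_of_ord2 t ht, hax, hta⟩
  -- classification: any order-2 element ≠ x is a or x+a
  have class2 : ∀ t : G24, addOrderOf t = 2 → t ≠ x → t = a ∨ t = x + a := by
    intro t ht htx
    rcases klein2 a x t ⟨haa, hxx, two_smul_of_ord2 t ht, hane, hxne,
      ne_zero_of_ord2 t ht, Ne.symm hax, htx⟩ with h | h
    · exact Or.inl h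
    · exact Or.inr (by rw [h, add_comm])
  -- any nonzero element not in A22-related position has θ-image of the right order
  have ordθ4 : ∀ y : G24, addOrderOf y = 2 → y ≠ x → addOrderOf (θ y) = 4 := by
    intro y hy hyx
    rcases ordcases (θ y) with h | h | h
    · rw [AddMonoid.addOrderOf_eq_one_iff] at h
      exact absurd (θinj (h.trans h0.symm)) (ne_zero_of_ord2 y hy)
    · exact absurd (mem22 y hy h) hyx
    · exact h
  constructor
  · -- θ '' A 4 2 θ = {x, x + a}
    ext t
    simp only [Set.mem_image, Set.mem_insert_iff, Set.mem_singleton_iff]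
    constructor
    · rintro ⟨y, ⟨hy4, hy2⟩, rfl⟩
      have hya : θ y ≠ a := by
        intro h
        have := θinj h
        rw [this] at hy4; omega
      exact class1 (θ y) hy2 hya
    · intro ht
      obtain ⟨y, rfl⟩ := θsurj t
      have hθy2 : addOrderOf (θ y) = 2 := by
        rcases ht with h | h
        · rw [h]; exact hx2
        · rw [h]; exact hs2
      have hθyne : θ y ≠ a := by
        rcases ht with h | h
        · rw [h]; exact hax
        · rw [h]; exact hsa
      have hyne : y ≠ 0 := by
        intro h; rw [h, h0] at hθy2; simp at hθy2
      have hy4 : addOrderOf y = 4 := by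
        rcases ordcases y with h | h | h
        · exact absurd (AddMonoid.addOrderOf_eq_one_iff.mp h) hyne
        · exact absurd (by rw [mem22 y h hθy2]) hθyne
        · exact h
      exact ⟨y, ⟨hy4, hθy2⟩, rfl⟩
  · -- A 2 4 θ = {a, x + a}
    ext t
    simp only [Set.mem_insert_iff, Set.mem_singleton_iff]
    constructor
    · rintro ⟨ht2, ht4⟩
      have htx : t ≠ x := by
        rintro rfl; rw [← ha] at ht4; omega
      exact class2 t ht2 htx
    · rintro (rfl | rfl)
      · exact ⟨ha2, ordθ4 a ha2 (Ne.symm hax)⟩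
      · exact ⟨hs2, ordθ4 (x + a) hs2 hsx⟩
end

section
/- Let G = Z₂ × Z₄, θ a normalized orthomorphism of G, x the unique element of A₂₂, and a ∈ A₄₄ \ θ(A₄₄). Then θ(a) = ax. Moreover A₄₄ = {a, ax}, θ(A₄₄) = {ax, ax·θ(x)}, and A₄₂ = {ax·θ(x), a·θ(x)}. -/
lemma ord_two_iff (g : G24) : addOrderOf g = 2 ↔ g ≠ 0 ∧ g + g = 0 := by
  constructor
  · intro h
    refine ⟨?_, ?_⟩
    · intro h0; rw [h0, addOrderOf_zero] at h; norm_num at h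
    · have := addOrderOf_nsmul_eq_zero g
      rw [h, two_nsmul] at this; exact this
  · rintro ⟨h0, h2⟩
    exact addOrderOf_eq_prime (by rw [two_nsmul]; exact h2) h0

lemma four_nsmul (g : G24) : (4 : ℕ) • g = 0 := by
  have h : g + g + (g + g) = 0 := by revert g; decide
  have h2 : (2:ℕ) • ((2:ℕ) • g) = 0 := by rw [two_nsmul, two_nsmul]; exact h
  have h3 : (2*2:ℕ) • g = 0 := by rw [mul_nsmul]; exact h2
  exact h3

lemma ord_four_iff (g : G24) : addOrderOf g = 4 ↔ g + g ≠ 0 := by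
  have hdvd : addOrderOf g ∣ 4 := addOrderOf_dvd_of_nsmul_eq_zero (four_nsmul g)
  have h2 : g + g = 0 ↔ addOrderOf g ∣ 2 := by
    rw [addOrderOf_dvd_iff_nsmul_eq_zero, two_nsmul]
  constructor
  · intro h hg; rw [h2, h] at hg; norm_num at hg
  · intro h
    have h' : ¬ addOrderOf g ∣ 2 := fun hd => h (h2.mpr hd)
    have hle := Nat.le_of_dvd (by norm_num) hdvd
    interval_cases h1 : addOrderOf g <;> simp_all <;> omega

/- Decidable arithmetic helpers on `G24`. -/
lemma Gneg (u : G24) (h : u + u = 0) : -u = u := by revert h; revert u; decide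

lemma Gdouble (u v : G24) (h : v + v = 0) : (u+v)+(u+v) = u+u := by
  revert h; revert u v; decide

lemma Geta (u v : G24) (hu : u+u ≠ 0) (hv : v+v ≠ 0) : (-u+v)+(-u+v) = 0 := by
  revert hu hv; revert u v; decide

set_option synthInstance.maxSize 2000 in
set_option maxRecDepth 8000 in
lemma Ginvol3 (w x t : G24) (hw : w+w=0) (hw0 : w≠0) (hx : x+x=0) (hx0 : x≠0)
    (ht : t+t=0) (ht0 : t≠0) (hxt : x≠t) : w = x ∨ w = t ∨ w = x+t := by
  revert hw hw0 hx hx0 ht ht0 hxt; revert w x t; decide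

set_option synthInstance.maxSize 2000 in
set_option maxRecDepth 8000 in
lemma Gcoset (u b x t : G24) (hx : x+x=0) (hx0 : x≠0) (ht : t+t=0) (ht0 : t≠0)
    (hxt : x≠t) (hu : u+u≠0) (hb : b+b≠0) :
    u = b ∨ u = b+x ∨ u = b+t ∨ u = b+x+t := by
  revert u b x t
  decide

set_option synthInstance.maxSize 2000 in
set_option maxRecDepth 8000 in
lemma Garith (a x t : G24) (hx : x+x=0) (ht : t+t=0) :
    (a+x+x = a) ∧ (a+t+t = a) ∧ (a+x+t+x = a+t) ∧ (a+x+t+t = a+x) ∧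
    (a+t+x = a+x+t) ∧
    ((a+x)+(a+x) = a+a) ∧ ((a+t)+(a+t) = a+a) ∧ ((a+x+t)+(a+x+t) = a+a) ∧
    (x ≠ t → a+x+t ≠ a) ∧ (t ≠ 0 → a+x+t ≠ a+x) ∧ (x ≠ 0 → a+x+t ≠ a+t) ∧
    (x ≠ 0 → a+x ≠ a) ∧ (t ≠ 0 → a+t ≠ a) ∧ (x ≠ t → a+x ≠ a+t) ∧
    (a+a ≠ 0 → a+x ≠ 0) ∧ (a+a ≠ 0 → a+t ≠ 0) ∧ (a+a ≠ 0 → a+x+t ≠ 0) := by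
  revert hx ht; revert a x t; decide

set_option synthInstance.maxSize 2000 in
set_option maxRecDepth 8000 in
lemma Garith4 (a c x t : G24) (hx : x+x=0) (ht : t+t=0) (hc : c+c=0) :
    ((c+x)+(c+x) = 0) ∧ (c ≠ x → c+x ≠ 0) ∧ (c ≠ 0 → c+x ≠ x) ∧
    (x ≠ 0 → c+x ≠ c) ∧ ((c+x)+(a+x) = c+a) := by
  revert hx ht hc; revert a c x t; decide

theorem structure_A44 (θ : G24 → G24) (hθ : IsNormOrtho θ) (x a : G24)
    (hx : A 2 2 θ = {x}) (ha : a ∈ A 4 4 θ \ θ '' A 4 4 θ) :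
    θ a = a + x ∧ A 4 4 θ = {a, a + x} ∧
      θ '' A 4 4 θ = {a + x, a + x + θ x} ∧
      A 4 2 θ = {a + x + θ x, a + θ x} := by
  obtain ⟨θbij, θ0, ηbij⟩ := hθ
  have θinj : Function.Injective θ := θbij.1
  have θsur : Function.Surjective θ := θbij.2
  have ηinj : ∀ {u v : G24}, -u + θ u = -v + θ v → u = v := fun h => ηbij.1 h
  have ηsur : ∀ w : G24, ∃ u : G24, -u + θ u = w := fun w => ηbij.2 w
  have hxm : ∀ g : G24, (addOrderOf g = 2 ∧ addOrderOf (θ g) = 2) ↔ g = x := fun g => by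
    simpa [A] using Set.ext_iff.mp hx g
  -- basic facts about x and θ x
  obtain ⟨ox, otx⟩ := (hxm x).mpr rfl
  rw [ord_two_iff] at ox otx
  obtain ⟨hx0, hxx⟩ := ox
  obtain ⟨ht0, htt⟩ := otx
  have θne0 : ∀ g : G24, g ≠ 0 → θ g ≠ 0 := by
    intro g hg he
    exact hg (θinj (he.trans θ0.symm))
  have huniq : ∀ g : G24, g ≠ 0 → g + g = 0 → θ g + θ g = 0 → g = x := by
    intro g h0 h2 hth
    exact (hxm g).mp ⟨(ord_two_iff g).mpr ⟨h0, h2⟩,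
      (ord_two_iff (θ g)).mpr ⟨θne0 g h0, hth⟩⟩
  have htx : θ x ≠ x := by
    intro he
    have : -x + θ x = -(0:G24) + θ 0 := by
      rw [he, Gneg x hxx, hxx, θ0, neg_zero, add_zero]
    exact hx0 (ηinj this)
  have hxt : x ≠ θ x := fun h => htx h.symm
  -- facts about a
  obtain ⟨⟨hax4, haθ4⟩, hani⟩ := ha
  rw [ord_four_iff] at hax4 haθ4
  have hnimg : ∀ b : G24, b + b ≠ 0 → θ b + θ b ≠ 0 → θ b ≠ a := by
    intro b hb1 hb2 he
    exact hani ⟨b, ⟨(ord_four_iff b).mpr hb1, (ord_four_iff (θ b)).mpr hb2⟩, he⟩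
  have ha0 : a ≠ 0 := fun h => hax4 (by rw [h, add_zero])
  -- a₁ with θ a₁ = a₁ + x
  obtain ⟨a₁, ha₁⟩ := ηsur x
  have hθa₁ : θ a₁ = a₁ + x := by rw [← ha₁, add_neg_cancel_left]
  have ha₁0 : a₁ ≠ 0 := by
    intro h
    rw [h, θ0, neg_zero, zero_add] at ha₁
    exact hx0 ha₁.symm
  have ha₁4 : a₁ + a₁ ≠ 0 := by
    intro h
    have hθ2 : θ a₁ + θ a₁ = 0 := by rw [hθa₁, Gdouble a₁ x hxx]; exact h
    have hax : a₁ = x := huniq a₁ ha₁0 h hθ2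
    rw [hax, hxx] at hθa₁
    exact ht0 hθa₁
  have hθa₁4 : θ a₁ + θ a₁ ≠ 0 := by
    rw [hθa₁, Gdouble a₁ x hxx]; exact ha₁4
  -- a₂ with θ a₂ = a₂ + θ x
  obtain ⟨a₂, ha₂⟩ := ηsur (θ x)
  have hθa₂ : θ a₂ = a₂ + θ x := by rw [← ha₂, add_neg_cancel_left]
  have ha₂0 : a₂ ≠ 0 := by
    intro h
    rw [h, θ0, neg_zero, zero_add] at ha₂
    exact ht0 ha₂.symm
  have ha₂4 : a₂ + a₂ ≠ 0 := by
    intro h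
    have hθ2 : θ a₂ + θ a₂ = 0 := by rw [hθa₂, Gdouble a₂ (θ x) htt]; exact h
    have hax : a₂ = x := huniq a₂ ha₂0 h hθ2
    rw [hax] at hθa₂
    have h' : x + θ x = 0 + θ x := by rw [zero_add]; exact hθa₂.symm
    exact hx0 (add_right_cancel h')
  have hθa₂4 : θ a₂ + θ a₂ ≠ 0 := by
    rw [hθa₂, Gdouble a₂ (θ x) htt]; exact ha₂4
  have ha₁₂ : a₁ ≠ a₂ := by
    intro h
    apply hxt
    calc x = -a₁ + θ a₁ := ha₁.symm
      _ = -a₂ + θ a₂ := by rw [h]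
      _ = θ x := ha₂
  -- any element of A44 (in algebraic form) is a₁ or a₂
  have hA44sub : ∀ g : G24, g + g ≠ 0 → θ g + θ g ≠ 0 → g = a₁ ∨ g = a₂ := by
    intro g hg hθg
    have hη2 : (-g + θ g) + (-g + θ g) = 0 := Geta g (θ g) hg hθg
    have hη0 : -g + θ g ≠ 0 := by
      intro h
      have hg0 : g = 0 := ηinj (by rw [h, θ0, neg_zero, add_zero])
      exact hg (by rw [hg0, add_zero])
    have hηx : -g + θ g ≠ x + θ x := by
      intro h
      have hgx : g = x := ηinj (by rw [h, Gneg x hxx])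
      exact hg (by rw [hgx]; exact hxx)
    rcases Ginvol3 (-g + θ g) x (θ x) hη2 hη0 hxx hx0 htt ht0 hxt with h | h | h
    · exact Or.inl (ηinj (h.trans ha₁.symm))
    · exact Or.inr (ηinj (h.trans ha₂.symm))
    · exact absurd h hηx
  -- a = a₁
  have haa₁ : a = a₁ := by
    rcases hA44sub a hax4 haθ4 with h | h
    · exact h
    exfalso
    rw [← h] at hθa₂ ha₁₂
    -- now hθa₂ : θ a = a + θ x, ha₁₂ : a₁ ≠ a
    have hn₁ : θ a₁ ≠ a := hnimg a₁ ha₁4 hθa₁4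
    rw [hθa₁] at hn₁
    obtain ⟨hg1, hg2, hg3, hg4, hg5, hg6, hg7, hg8, hg9, hg10, hg11, hg12,
      hg13, hg14, hg15, hg16, hg17⟩ := Garith a x (θ x) hxx htt
    rcases Gcoset a₁ a x (θ x) hxx hx0 htt ht0 hxt ha₁4 hax4 with h1 | h1 | h1 | h1
    · exact ha₁₂ h1
    · apply hn₁; rw [h1]; exact hg1
    · -- a₁ = a + θ x : the main subcase
      obtain ⟨c, hc⟩ := θsur a
      have hc0 : c ≠ 0 := by
        intro h'
        rw [h', θ0] at hc
        exact ha0 hc.symm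
      have hcc : c + c = 0 := by
        by_contra hcc
        exact hnimg c hcc (by rw [hc]; exact hax4) hc
      have hcx : c ≠ x := by
        intro h'
        rw [h'] at hc
        apply hax4
        rw [← hc]
        exact htt
      obtain ⟨hq1, hq2, hq3, hq4, hq5⟩ := Garith4 a c x (θ x) hxx htt hcc
      -- u := c + x
      have hu0 : c + x ≠ 0 := hq2 hcx
      have hux : c + x ≠ x := hq3 hc0
      have huc : c + x ≠ c := hq4 hx0
      have hu4 : θ (c+x) + θ (c+x) ≠ 0 := by
        intro h'
        exact hux (huniq (c+x) hu0 hq1 h')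
      have hua : c + x ≠ a := by
        intro h'
        rw [h'] at hq1
        exact hax4 hq1
      have hua₁ : c + x ≠ a₁ := by
        intro h'
        rw [h'] at hq1
        exact ha₁4 hq1
      -- pigeonhole : θ (c+x) = a + x
      have hθu : θ (c+x) = a + x := by
        rcases Gcoset (θ (c+x)) a x (θ x) hxx hx0 htt ht0 hxt hu4 hax4 with
          h2 | h2 | h2 | h2
        · exact absurd (θinj (h2.trans hc.symm)) huc
        · exact h2
        · rw [← hθa₂] at h2
          exact absurd (θinj h2) hua
        · have e : θ a₁ = a + x + θ x := by rw [hθa₁, h1]; exact hg5.symm ▸ rfl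
          rw [← e] at h2
          exact absurd (θinj h2) hua₁
      -- η clash between c and c + x
      have : c + x = c := by
        apply ηinj
        rw [Gneg (c+x) hq1, Gneg c hcc, hθu, hc]
        exact hq5
      exact huc this
    · -- a₁ = a + x + θ x
      apply ha₁₂
      apply θinj
      rw [hθa₁, hθa₂, h1]
      exact hg3
  rw [← haa₁] at hθa₁ ha₁4 hθa₁4 ha₁₂
  -- now hθa₁ : θ a = a + x, ha₁₂ : a ≠ a₂
  obtain ⟨hg1, hg2, hg3, hg4, hg5, hg6, hg7, hg8, hg9, hg10, hg11, hg12,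
    hg13, hg14, hg15, hg16, hg17⟩ := Garith a x (θ x) hxx htt
  -- a₂ = a + x
  have hn₂ : θ a₂ ≠ a := hnimg a₂ ha₂4 hθa₂4
  rw [hθa₂] at hn₂
  have ha₂ax : a₂ = a + x := by
    rcases Gcoset a₂ a x (θ x) hxx hx0 htt ht0 hxt ha₂4 hax4 with h | h | h | h
    · exact absurd h.symm ha₁₂
    · exact h
    · exfalso; apply hn₂; rw [h]; exact hg2
    · exfalso
      apply ha₁₂
      symm
      apply θinj
      rw [hθa₁, hθa₂, h]
      exact hg4
  rw [ha₂ax] at hθa₂ ha₂4 hθa₂4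
  -- hθa₂ : θ (a + x) = a + x + θ x
  have hA44eq : A 4 4 θ = {a, a + x} := by
    ext g
    simp only [A, Set.mem_setOf_eq, ord_four_iff, Set.mem_insert_iff,
      Set.mem_singleton_iff]
    constructor
    · rintro ⟨h1, h2⟩
      rcases hA44sub g h1 h2 with h | h
      · exact Or.inl (h.trans haa₁.symm)
      · exact Or.inr (h.trans ha₂ax)
    · rintro (h | h) <;> subst h
      · exact ⟨hax4, haθ4⟩
      · refine ⟨by rw [hg6]; exact hax4, ?_⟩
        rw [hθa₂, hg8]
        exact hax4
  refine ⟨hθa₁, hA44eq, ?_, ?_⟩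
  · rw [hA44eq]
    rw [Set.image_pair, hθa₁, hθa₂]
  · ext g
    simp only [A, Set.mem_setOf_eq, ord_four_iff, ord_two_iff, Set.mem_insert_iff,
      Set.mem_singleton_iff]
    constructor
    · rintro ⟨h1, h2, h3⟩
      rcases Gcoset g a x (θ x) hxx hx0 htt ht0 hxt h1 hax4 with h | h | h | h
      · exfalso; subst h; rw [hθa₁, hg6] at h3; exact hax4 h3
      · exfalso; subst h; rw [hθa₂, hg8] at h3; exact hax4 h3
      · exact Or.inr h
      · exact Or.inl h
    · have key : ∀ g : G24, g ≠ 0 → g ≠ a → g ≠ a + x → g + g ≠ 0 →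
          θ g ≠ 0 ∧ θ g + θ g = 0 := by
        intro g hg0 hga hgax hg4
        refine ⟨θne0 g hg0, ?_⟩
        by_contra h'
        rcases hA44sub g hg4 h' with h | h
        · exact hga (h.trans haa₁.symm)
        · exact hgax (h.trans ha₂ax)
      rintro (h | h) <;> subst h
      · refine ⟨by rw [hg8]; exact hax4, ?_⟩
        exact key _ (hg17 hax4) (hg9 hxt) (hg10 ht0) (by rw [hg8]; exact hax4)
      · refine ⟨by rw [hg7]; exact hax4, ?_⟩
        exact key _ (hg16 hax4) (hg13 ht0) (fun e => hg14 hxt e.symm) (by rw [hg7]; exact hax4)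
end

section
/- Let G = Z₂ × Z₄ and θ₁, θ₂ normalized orthomorphisms of G with respective sets A₄₄ and A₄₄′. If |A₄₄ ∩ A₄₄′| = 1, then θ₁ and θ₂ are not orthogonal. -/
/-- The list of all elements of `G24`. -/
def l : List G24 := [(0,0), (0,1), (0,2), (0,3), (1,0), (1,1), (1,2), (1,3)]

def L : List (List G24) := [
  [(0,0), (0,2), (1,0), (1,2), (0,1), (1,3), (1,1), (0,3)],
  [(0,0), (0,2), (1,0), (1,2), (1,3), (0,1), (0,3), (1,1)],
  [(0,0), (0,2), (1,1), (1,3), (0,1), (0,3), (1,0), (1,2)],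
  [(0,0), (0,2), (1,1), (1,3), (1,2), (1,0), (0,3), (0,1)],
  [(0,0), (0,2), (1,2), (1,0), (0,3), (1,3), (1,1), (0,1)],
  [(0,0), (0,2), (1,2), (1,0), (1,3), (0,3), (0,1), (1,1)],
  [(0,0), (0,2), (1,3), (1,1), (0,3), (0,1), (1,0), (1,2)],
  [(0,0), (0,2), (1,3), (1,1), (1,2), (1,0), (0,1), (0,3)],
  [(0,0), (0,3), (1,0), (1,3), (0,1), (1,2), (1,1), (0,2)],
  [(0,0), (0,3), (1,0), (1,3), (1,1), (0,2), (0,1), (1,2)],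
  [(0,0), (0,3), (1,1), (1,0), (0,2), (0,1), (1,3), (1,2)],
  [(0,0), (0,3), (1,1), (1,0), (1,3), (1,2), (0,2), (0,1)],
  [(0,0), (0,3), (1,2), (1,1), (0,1), (1,0), (1,3), (0,2)],
  [(0,0), (0,3), (1,2), (1,1), (1,3), (0,2), (0,1), (1,0)],
  [(0,0), (0,3), (1,3), (1,2), (0,2), (0,1), (1,1), (1,0)],
  [(0,0), (0,3), (1,3), (1,2), (1,1), (1,0), (0,2), (0,1)],
  [(0,0), (1,0), (0,1), (1,1), (1,2), (0,2), (1,3), (0,3)],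
  [(0,0), (1,0), (0,1), (1,3), (0,2), (1,2), (0,3), (1,1)],
  [(0,0), (1,0), (0,3), (1,1), (0,1), (1,3), (0,2), (1,2)],
  [(0,0), (1,0), (0,3), (1,3), (1,2), (0,2), (1,1), (0,1)],
  [(0,0), (1,0), (1,2), (0,2), (0,1), (0,3), (1,3), (1,1)],
  [(0,0), (1,0), (1,2), (0,2), (1,1), (1,3), (0,3), (0,1)],
  [(0,0), (1,0), (1,3), (0,1), (0,2), (1,2), (1,1), (0,3)],
  [(0,0), (1,0), (1,3), (0,1), (1,1), (0,3), (0,2), (1,2)],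
  [(0,0), (1,1), (0,1), (1,0), (1,2), (0,3), (1,3), (0,2)],
  [(0,0), (1,1), (0,1), (1,2), (0,2), (1,3), (0,3), (1,0)],
  [(0,0), (1,1), (0,3), (1,0), (0,2), (1,3), (0,1), (1,2)],
  [(0,0), (1,1), (0,3), (1,2), (1,3), (0,2), (1,0), (0,1)],
  [(0,0), (1,1), (1,0), (0,1), (0,3), (0,2), (1,3), (1,2)],
  [(0,0), (1,1), (1,0), (0,1), (1,3), (1,2), (0,3), (0,2)],
  [(0,0), (1,1), (1,3), (0,2), (0,3), (1,2), (1,0), (0,1)],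
  [(0,0), (1,1), (1,3), (0,2), (1,2), (0,3), (0,1), (1,0)],
  [(0,0), (1,2), (0,1), (1,1), (0,3), (1,3), (0,2), (1,0)],
  [(0,0), (1,2), (0,1), (1,3), (1,1), (0,3), (1,0), (0,2)],
  [(0,0), (1,2), (0,3), (1,1), (1,3), (0,1), (1,0), (0,2)],
  [(0,0), (1,2), (0,3), (1,3), (0,2), (1,0), (0,1), (1,1)],
  [(0,0), (1,2), (1,0), (0,2), (0,3), (0,1), (1,3), (1,1)],
  [(0,0), (1,2), (1,0), (0,2), (1,1), (1,3), (0,1), (0,3)],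
  [(0,0), (1,2), (1,1), (0,1), (0,2), (1,0), (1,3), (0,3)],
  [(0,0), (1,2), (1,1), (0,1), (1,3), (0,3), (0,2), (1,0)],
  [(0,0), (1,3), (0,1), (1,0), (0,3), (1,2), (0,2), (1,1)],
  [(0,0), (1,3), (0,1), (1,2), (1,1), (0,2), (1,0), (0,3)],
  [(0,0), (1,3), (0,3), (1,0), (1,2), (0,1), (1,1), (0,2)],
  [(0,0), (1,3), (0,3), (1,2), (0,1), (1,0), (0,2), (1,1)],
  [(0,0), (1,3), (1,1), (0,2), (0,1), (1,2), (1,0), (0,3)],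
  [(0,0), (1,3), (1,1), (0,2), (1,2), (0,1), (0,3), (1,0)],
  [(0,0), (1,3), (1,2), (0,1), (0,3), (0,2), (1,1), (1,0)],
  [(0,0), (1,3), (1,2), (0,1), (1,1), (1,0), (0,3), (0,2)]]

lemma lnodup : l.Nodup := by decide

lemma luniv : l.toFinset = Finset.univ := by decide

set_option maxRecDepth 400000 in
lemma L1 : l.all (fun b => (b == 0) || (l.filter (fun x => !(x == 0 || x == b))).permutations'.all (fun r =>
   !(decide ((List.zipWith (fun x y => -x + y) l (0 :: b :: r)).Nodup)) || decide ((0 :: b :: r) ∈ L))) = true := by decide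

set_option maxRecDepth 40000 in
lemma L2 : L.all (fun t₁ => L.all (fun t₂ =>
   !(List.countP (fun q => decide (q.1 + q.1 ≠ 0) && decide (q.2.1 + q.2.1 ≠ 0) && decide (q.2.2 + q.2.2 ≠ 0))
       (List.zipWith Prod.mk l (List.zipWith Prod.mk t₁ t₂)) == 1) ||
   !(decide ((List.zipWith (fun a b => -a + b) t₁ t₂).Nodup)))) = true := by decide

lemma ord4 (x : G24) : addOrderOf x = 4 ↔ x + x ≠ 0 := by
  have h4 : (4 : ℕ) • x = 0 := by
    rw [nsmul_eq_mul, show ((4 : ℕ) : G24) = 0 by decide, zero_mul]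
  have hd : addOrderOf x ∣ 4 := addOrderOf_dvd_of_nsmul_eq_zero h4
  constructor
  · intro h hxx
    have h2 : addOrderOf x ∣ 2 := addOrderOf_dvd_iff_nsmul_eq_zero.2 (by rw [two_nsmul]; exact hxx)
    rw [h] at h2
    norm_num at h2
  · intro hxx
    have hpos : 0 < addOrderOf x := addOrderOf_pos x
    have hle : addOrderOf x ≤ 4 := Nat.le_of_dvd (by norm_num) hd
    obtain ⟨n, hn⟩ : ∃ n, addOrderOf x = n := ⟨_, rfl⟩
    rw [hn] at hd hpos hle ⊢
    interval_cases n
    · exfalso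
      have hx0 : x = 0 := AddMonoid.addOrderOf_eq_one_iff.1 hn
      simp [hx0] at hxx
    · exfalso
      have h2 : (2 : ℕ) • x = 0 := by
        have h5 := addOrderOf_nsmul_eq_zero x
        rwa [hn] at h5
      rw [two_nsmul] at h2
      exact hxx h2
    · exact absurd hd (by norm_num)
    · rfl

/-- Every normalized orthomorphism's value tuple is in `L`. -/
lemma tuple_mem_L (θ : G24 → G24) (h : IsNormOrtho θ) : l.map θ ∈ L := by
  obtain ⟨hbij, h0, hcomp⟩ := h
  have hnd : (l.map θ).Nodup := lnodup.map hbij.1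
  have htf : (l.map θ).toFinset = l.toFinset := by
    rw [luniv]
    apply Finset.eq_univ_of_card
    rw [List.toFinset_card_of_nodup hnd]
    simp [l]
  have hperm : (l.map θ).Perm l := List.perm_of_nodup_nodup_toFinset_eq hnd lnodup htf
  have hθ0 : θ ((0 : ZMod 2), (0 : ZMod 4)) = 0 := h0
  have hb0 : θ ((0 : ZMod 2), (1 : ZMod 4)) ≠ 0 := by
    intro hc
    exact absurd (hbij.1 (hc.trans hθ0.symm)) (by decide)
  have hshape : l.map θ = 0 :: θ ((0 : ZMod 2), (1 : ZMod 4)) ::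
      [θ (0,2), θ (0,3), θ (1,0), θ (1,1), θ (1,2), θ (1,3)] := by
    simp [l, hθ0, h0]
  have hbl : θ ((0 : ZMod 2), (1 : ZMod 4)) ∈ l := by
    have hall : ∀ x : G24, x ∈ l := by decide
    exact hall _
  have hnd2 : (0 :: θ ((0 : ZMod 2), (1 : ZMod 4)) ::
      [θ (0,2), θ (0,3), θ (1,0), θ (1,1), θ (1,2), θ (1,3)] : List G24).Nodup := by
    rw [← hshape]; exact hnd
  have hrperm : ([θ (0,2), θ (0,3), θ (1,0), θ (1,1), θ (1,2), θ (1,3)] : List G24).Perm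
      (l.filter (fun x => !(x == 0 || x == θ ((0 : ZMod 2), (1 : ZMod 4))))) := by
    have h1 := hperm.filter (fun x => !(x == 0 || x == θ ((0 : ZMod 2), (1 : ZMod 4))))
    rw [hshape] at h1
    rw [List.filter_cons_of_neg (by simp), List.filter_cons_of_neg (by simp)] at h1
    rwa [List.filter_eq_self.2] at h1
    intro a ha
    have h0nr : (0 : G24) ∉ (θ ((0 : ZMod 2), (1 : ZMod 4)) ::
        [θ (0,2), θ (0,3), θ (1,0), θ (1,1), θ (1,2), θ (1,3)] : List G24) :=
      (List.nodup_cons.1 hnd2).1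
    have hbnr : θ ((0 : ZMod 2), (1 : ZMod 4)) ∉
        ([θ (0,2), θ (0,3), θ (1,0), θ (1,1), θ (1,2), θ (1,3)] : List G24) :=
      (List.nodup_cons.1 (List.nodup_cons.1 hnd2).2).1
    simp only [Bool.not_eq_true', Bool.or_eq_false_iff, beq_eq_false_iff_ne, ne_eq]
    constructor
    · intro hc; exact h0nr (List.mem_cons_of_mem _ (hc ▸ ha))
    · intro hc; exact hbnr (hc ▸ ha)
  have hrmem := List.mem_permutations'.2 hrperm
  have hcompnd : (List.zipWith (fun x y => -x + y) l (l.map θ)).Nodup := by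
    rw [List.zipWith_map_right, List.zipWith_self]
    exact lnodup.map hcomp.1
  have hL1 := List.all_eq_true.1 L1 _ hbl
  simp only [Bool.or_eq_true, beq_iff_eq] at hL1
  rcases hL1 with hb | hall
  · exact absurd hb hb0
  · have hx := List.all_eq_true.1 hall _ hrmem
    simp only [Bool.or_eq_true, Bool.not_eq_true', decide_eq_false_iff_not,
      decide_eq_true_eq] at hx
    rw [hshape]
    rcases hx with hnn | hmem
    · exact absurd (by rwa [hshape] at hcompnd) hnn
    · exact hmem

theorem not_orth_of_A44_inter_one (θ₁ θ₂ : G24 → G24)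
    (h₁ : IsNormOrtho θ₁) (h₂ : IsNormOrtho θ₂)
    (h : (A 4 4 θ₁ ∩ A 4 4 θ₂).ncard = 1) : ¬ Orthogonal θ₁ θ₂ := by
  intro horth
  have ht₁ := tuple_mem_L θ₁ h₁
  have ht₂ := tuple_mem_L θ₂ h₂
  -- convert h to a countP statement
  have hset : A 4 4 θ₁ ∩ A 4 4 θ₂ =
      ↑(Finset.univ.filter (fun x : G24 => (decide (x + x ≠ 0) && decide (θ₁ x + θ₁ x ≠ 0) && decide (θ₂ x + θ₂ x ≠ 0)) = true)) := by
    ext x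
    simp only [A, Set.mem_inter_iff, Set.mem_setOf_eq, Finset.coe_filter, Finset.mem_univ,
      true_and, Bool.and_eq_true, decide_eq_true_eq, ord4]
    tauto
  rw [hset, Set.ncard_coe_finset] at h
  have hcount : List.countP
      (fun q : G24 × G24 × G24 => decide (q.1 + q.1 ≠ 0) && decide (q.2.1 + q.2.1 ≠ 0) && decide (q.2.2 + q.2.2 ≠ 0))
      (List.zipWith Prod.mk l (List.zipWith Prod.mk (l.map θ₁) (l.map θ₂))) = 1 := by
    rw [List.zipWith_map, List.zipWith_self, List.zipWith_map_right, List.zipWith_self,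
      List.countP_map]
    rw [← h]
    rw [show Finset.univ = l.toFinset from luniv.symm, ← List.toFinset_filter,
      List.toFinset_card_of_nodup (lnodup.filter _), List.countP_eq_length_filter]
    rfl
  -- apply L2
  have hL2 := List.all_eq_true.1 (List.all_eq_true.1 L2 _ ht₁) _ ht₂
  simp only [Bool.or_eq_true, Bool.not_eq_true', beq_eq_false_iff_ne, ne_eq,
    decide_eq_false_iff_not] at hL2
  rcases hL2 with hc | hnn
  · exact hc hcount
  · apply hnn
    rw [List.zipWith_map, List.zipWith_self]
    exact lnodup.map horth.1
end

section
/- Every normalized orthomorphism of G = Z₂ × Z₄ is orthogonal to exactly two other normalized orthomorphisms of G. -/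
set_option maxRecDepth 10000
set_option synthInstance.maxHeartbeats 1000000
set_option maxHeartbeats 4000000


instance : DecidablePred IsNormOrtho := fun θ => by
  unfold IsNormOrtho; infer_instance

instance (θ₁ θ₂ : G24 → G24) : Decidable (Orthogonal θ₁ θ₂) := by
  unfold Orthogonal; infer_instance

/-- All elements of `G24`. -/
def allE : List G24 := [(0,0),(0,1),(0,2),(0,3),(1,0),(1,1),(1,2),(1,3)]

/-- Nonzero elements. -/
def nzE : List G24 := [(0,1),(0,2),(0,3),(1,0),(1,1),(1,2),(1,3)]

/-- Function from a value table (aligned with `allE`). -/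
def ofT (l : List G24) : G24 → G24 := fun x =>
  if x = (0,0) then l.getD 0 0 else if x = (0,1) then l.getD 1 0 else
  if x = (0,2) then l.getD 2 0 else if x = (0,3) then l.getD 3 0 else
  if x = (1,0) then l.getD 4 0 else if x = (1,1) then l.getD 5 0 else
  if x = (1,2) then l.getD 6 0 else l.getD 7 0

/-- The 48 normalized orthomorphisms with their two mates. -/
def trip : List (List G24 × List G24 × List G24) := [
([(0,0),(0,2),(1,0),(1,2),(0,1),(1,3),(1,1),(0,3)], [(0,0),(0,3),(1,2),(1,1),(1,3),(0,2),(0,1),(1,0)], [(0,0),(1,3),(1,2),(0,1),(1,1),(1,0),(0,3),(0,2)]),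
([(0,0),(0,2),(1,0),(1,2),(1,3),(0,1),(0,3),(1,1)], [(0,0),(0,3),(1,2),(1,1),(0,1),(1,0),(1,3),(0,2)], [(0,0),(1,3),(1,2),(0,1),(0,3),(0,2),(1,1),(1,0)]),
([(0,0),(0,2),(1,1),(1,3),(0,1),(0,3),(1,0),(1,2)], [(0,0),(0,3),(1,3),(1,2),(1,1),(1,0),(0,2),(0,1)], [(0,0),(1,3),(0,1),(1,0),(0,3),(1,2),(0,2),(1,1)]),
([(0,0),(0,2),(1,1),(1,3),(1,2),(1,0),(0,3),(0,1)], [(0,0),(0,3),(1,3),(1,2),(0,2),(0,1),(1,1),(1,0)], [(0,0),(1,1),(0,3),(1,0),(0,2),(1,3),(0,1),(1,2)]),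
([(0,0),(0,2),(1,2),(1,0),(0,3),(1,3),(1,1),(0,1)], [(0,0),(0,3),(1,0),(1,3),(1,1),(0,2),(0,1),(1,2)], [(0,0),(1,1),(1,0),(0,1),(1,3),(1,2),(0,3),(0,2)]),
([(0,0),(0,2),(1,2),(1,0),(1,3),(0,3),(0,1),(1,1)], [(0,0),(0,3),(1,0),(1,3),(0,1),(1,2),(1,1),(0,2)], [(0,0),(1,1),(1,0),(0,1),(0,3),(0,2),(1,3),(1,2)]),
([(0,0),(0,2),(1,3),(1,1),(0,3),(0,1),(1,0),(1,2)], [(0,0),(0,3),(1,1),(1,0),(1,3),(1,2),(0,2),(0,1)], [(0,0),(1,3),(0,3),(1,2),(0,1),(1,0),(0,2),(1,1)]),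
([(0,0),(0,2),(1,3),(1,1),(1,2),(1,0),(0,1),(0,3)], [(0,0),(0,3),(1,1),(1,0),(0,2),(0,1),(1,3),(1,2)], [(0,0),(1,1),(0,1),(1,2),(0,2),(1,3),(0,3),(1,0)]),
([(0,0),(0,3),(1,0),(1,3),(0,1),(1,2),(1,1),(0,2)], [(0,0),(0,2),(1,2),(1,0),(1,3),(0,3),(0,1),(1,1)], [(0,0),(1,0),(1,2),(0,2),(1,1),(1,3),(0,3),(0,1)]),
([(0,0),(0,3),(1,0),(1,3),(1,1),(0,2),(0,1),(1,2)], [(0,0),(0,2),(1,2),(1,0),(0,3),(1,3),(1,1),(0,1)], [(0,0),(1,0),(1,2),(0,2),(0,1),(0,3),(1,3),(1,1)]),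
([(0,0),(0,3),(1,1),(1,0),(0,2),(0,1),(1,3),(1,2)], [(0,0),(0,2),(1,3),(1,1),(1,2),(1,0),(0,1),(0,3)], [(0,0),(1,0),(0,3),(1,3),(1,2),(0,2),(1,1),(0,1)]),
([(0,0),(0,3),(1,1),(1,0),(1,3),(1,2),(0,2),(0,1)], [(0,0),(0,2),(1,3),(1,1),(0,3),(0,1),(1,0),(1,2)], [(0,0),(1,2),(0,1),(1,3),(1,1),(0,3),(1,0),(0,2)]),
([(0,0),(0,3),(1,2),(1,1),(0,1),(1,0),(1,3),(0,2)], [(0,0),(0,2),(1,0),(1,2),(1,3),(0,1),(0,3),(1,1)], [(0,0),(1,2),(1,0),(0,2),(1,1),(1,3),(0,1),(0,3)]),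
([(0,0),(0,3),(1,2),(1,1),(1,3),(0,2),(0,1),(1,0)], [(0,0),(0,2),(1,0),(1,2),(0,1),(1,3),(1,1),(0,3)], [(0,0),(1,2),(1,0),(0,2),(0,3),(0,1),(1,3),(1,1)]),
([(0,0),(0,3),(1,3),(1,2),(0,2),(0,1),(1,1),(1,0)], [(0,0),(0,2),(1,1),(1,3),(1,2),(1,0),(0,3),(0,1)], [(0,0),(1,0),(0,1),(1,1),(1,2),(0,2),(1,3),(0,3)]),
([(0,0),(0,3),(1,3),(1,2),(1,1),(1,0),(0,2),(0,1)], [(0,0),(0,2),(1,1),(1,3),(0,1),(0,3),(1,0),(1,2)], [(0,0),(1,2),(0,3),(1,1),(1,3),(0,1),(1,0),(0,2)]),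
([(0,0),(1,0),(0,1),(1,1),(1,2),(0,2),(1,3),(0,3)], [(0,0),(0,3),(1,3),(1,2),(0,2),(0,1),(1,1),(1,0)], [(0,0),(1,1),(0,3),(1,0),(0,2),(1,3),(0,1),(1,2)]),
([(0,0),(1,0),(0,1),(1,3),(0,2),(1,2),(0,3),(1,1)], [(0,0),(1,1),(1,3),(0,2),(1,2),(0,3),(0,1),(1,0)], [(0,0),(1,3),(0,3),(1,0),(1,2),(0,1),(1,1),(0,2)]),
([(0,0),(1,0),(0,3),(1,1),(0,1),(1,3),(0,2),(1,2)], [(0,0),(1,1),(1,3),(0,2),(0,3),(1,2),(1,0),(0,1)], [(0,0),(1,3),(0,1),(1,2),(1,1),(0,2),(1,0),(0,3)]),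
([(0,0),(1,0),(0,3),(1,3),(1,2),(0,2),(1,1),(0,1)], [(0,0),(0,3),(1,1),(1,0),(0,2),(0,1),(1,3),(1,2)], [(0,0),(1,1),(0,1),(1,2),(0,2),(1,3),(0,3),(1,0)]),
([(0,0),(1,0),(1,2),(0,2),(0,1),(0,3),(1,3),(1,1)], [(0,0),(0,3),(1,0),(1,3),(1,1),(0,2),(0,1),(1,2)], [(0,0),(1,1),(1,0),(0,1),(1,3),(1,2),(0,3),(0,2)]),
([(0,0),(1,0),(1,2),(0,2),(1,1),(1,3),(0,3),(0,1)], [(0,0),(0,3),(1,0),(1,3),(0,1),(1,2),(1,1),(0,2)], [(0,0),(1,1),(1,0),(0,1),(0,3),(0,2),(1,3),(1,2)]),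
([(0,0),(1,0),(1,3),(0,1),(0,2),(1,2),(1,1),(0,3)], [(0,0),(1,1),(0,1),(1,0),(1,2),(0,3),(1,3),(0,2)], [(0,0),(1,3),(1,1),(0,2),(1,2),(0,1),(0,3),(1,0)]),
([(0,0),(1,0),(1,3),(0,1),(1,1),(0,3),(0,2),(1,2)], [(0,0),(1,1),(0,3),(1,2),(1,3),(0,2),(1,0),(0,1)], [(0,0),(1,3),(1,1),(0,2),(0,1),(1,2),(1,0),(0,3)]),
([(0,0),(1,1),(0,1),(1,0),(1,2),(0,3),(1,3),(0,2)], [(0,0),(1,0),(1,3),(0,1),(0,2),(1,2),(1,1),(0,3)], [(0,0),(1,2),(0,3),(1,3),(0,2),(1,0),(0,1),(1,1)]),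
([(0,0),(1,1),(0,1),(1,2),(0,2),(1,3),(0,3),(1,0)], [(0,0),(0,2),(1,3),(1,1),(1,2),(1,0),(0,1),(0,3)], [(0,0),(1,0),(0,3),(1,3),(1,2),(0,2),(1,1),(0,1)]),
([(0,0),(1,1),(0,3),(1,0),(0,2),(1,3),(0,1),(1,2)], [(0,0),(0,2),(1,1),(1,3),(1,2),(1,0),(0,3),(0,1)], [(0,0),(1,0),(0,1),(1,1),(1,2),(0,2),(1,3),(0,3)]),
([(0,0),(1,1),(0,3),(1,2),(1,3),(0,2),(1,0),(0,1)], [(0,0),(1,0),(1,3),(0,1),(1,1),(0,3),(0,2),(1,2)], [(0,0),(1,2),(0,1),(1,1),(0,3),(1,3),(0,2),(1,0)]),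
([(0,0),(1,1),(1,0),(0,1),(0,3),(0,2),(1,3),(1,2)], [(0,0),(0,2),(1,2),(1,0),(1,3),(0,3),(0,1),(1,1)], [(0,0),(1,0),(1,2),(0,2),(1,1),(1,3),(0,3),(0,1)]),
([(0,0),(1,1),(1,0),(0,1),(1,3),(1,2),(0,3),(0,2)], [(0,0),(0,2),(1,2),(1,0),(0,3),(1,3),(1,1),(0,1)], [(0,0),(1,0),(1,2),(0,2),(0,1),(0,3),(1,3),(1,1)]),
([(0,0),(1,1),(1,3),(0,2),(0,3),(1,2),(1,0),(0,1)], [(0,0),(1,0),(0,3),(1,1),(0,1),(1,3),(0,2),(1,2)], [(0,0),(1,2),(1,1),(0,1),(1,3),(0,3),(0,2),(1,0)]),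
([(0,0),(1,1),(1,3),(0,2),(1,2),(0,3),(0,1),(1,0)], [(0,0),(1,0),(0,1),(1,3),(0,2),(1,2),(0,3),(1,1)], [(0,0),(1,2),(1,1),(0,1),(0,2),(1,0),(1,3),(0,3)]),
([(0,0),(1,2),(0,1),(1,1),(0,3),(1,3),(0,2),(1,0)], [(0,0),(1,1),(0,3),(1,2),(1,3),(0,2),(1,0),(0,1)], [(0,0),(1,3),(1,1),(0,2),(0,1),(1,2),(1,0),(0,3)]),
([(0,0),(1,2),(0,1),(1,3),(1,1),(0,3),(1,0),(0,2)], [(0,0),(0,3),(1,1),(1,0),(1,3),(1,2),(0,2),(0,1)], [(0,0),(1,3),(0,3),(1,2),(0,1),(1,0),(0,2),(1,1)]),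
([(0,0),(1,2),(0,3),(1,1),(1,3),(0,1),(1,0),(0,2)], [(0,0),(0,3),(1,3),(1,2),(1,1),(1,0),(0,2),(0,1)], [(0,0),(1,3),(0,1),(1,0),(0,3),(1,2),(0,2),(1,1)]),
([(0,0),(1,2),(0,3),(1,3),(0,2),(1,0),(0,1),(1,1)], [(0,0),(1,1),(0,1),(1,0),(1,2),(0,3),(1,3),(0,2)], [(0,0),(1,3),(1,1),(0,2),(1,2),(0,1),(0,3),(1,0)]),
([(0,0),(1,2),(1,0),(0,2),(0,3),(0,1),(1,3),(1,1)], [(0,0),(0,3),(1,2),(1,1),(1,3),(0,2),(0,1),(1,0)], [(0,0),(1,3),(1,2),(0,1),(1,1),(1,0),(0,3),(0,2)]),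
([(0,0),(1,2),(1,0),(0,2),(1,1),(1,3),(0,1),(0,3)], [(0,0),(0,3),(1,2),(1,1),(0,1),(1,0),(1,3),(0,2)], [(0,0),(1,3),(1,2),(0,1),(0,3),(0,2),(1,1),(1,0)]),
([(0,0),(1,2),(1,1),(0,1),(0,2),(1,0),(1,3),(0,3)], [(0,0),(1,1),(1,3),(0,2),(1,2),(0,3),(0,1),(1,0)], [(0,0),(1,3),(0,3),(1,0),(1,2),(0,1),(1,1),(0,2)]),
([(0,0),(1,2),(1,1),(0,1),(1,3),(0,3),(0,2),(1,0)], [(0,0),(1,1),(1,3),(0,2),(0,3),(1,2),(1,0),(0,1)], [(0,0),(1,3),(0,1),(1,2),(1,1),(0,2),(1,0),(0,3)]),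
([(0,0),(1,3),(0,1),(1,0),(0,3),(1,2),(0,2),(1,1)], [(0,0),(0,2),(1,1),(1,3),(0,1),(0,3),(1,0),(1,2)], [(0,0),(1,2),(0,3),(1,1),(1,3),(0,1),(1,0),(0,2)]),
([(0,0),(1,3),(0,1),(1,2),(1,1),(0,2),(1,0),(0,3)], [(0,0),(1,0),(0,3),(1,1),(0,1),(1,3),(0,2),(1,2)], [(0,0),(1,2),(1,1),(0,1),(1,3),(0,3),(0,2),(1,0)]),
([(0,0),(1,3),(0,3),(1,0),(1,2),(0,1),(1,1),(0,2)], [(0,0),(1,0),(0,1),(1,3),(0,2),(1,2),(0,3),(1,1)], [(0,0),(1,2),(1,1),(0,1),(0,2),(1,0),(1,3),(0,3)]),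
([(0,0),(1,3),(0,3),(1,2),(0,1),(1,0),(0,2),(1,1)], [(0,0),(0,2),(1,3),(1,1),(0,3),(0,1),(1,0),(1,2)], [(0,0),(1,2),(0,1),(1,3),(1,1),(0,3),(1,0),(0,2)]),
([(0,0),(1,3),(1,1),(0,2),(0,1),(1,2),(1,0),(0,3)], [(0,0),(1,0),(1,3),(0,1),(1,1),(0,3),(0,2),(1,2)], [(0,0),(1,2),(0,1),(1,1),(0,3),(1,3),(0,2),(1,0)]),
([(0,0),(1,3),(1,1),(0,2),(1,2),(0,1),(0,3),(1,0)], [(0,0),(1,0),(1,3),(0,1),(0,2),(1,2),(1,1),(0,3)], [(0,0),(1,2),(0,3),(1,3),(0,2),(1,0),(0,1),(1,1)]),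
([(0,0),(1,3),(1,2),(0,1),(0,3),(0,2),(1,1),(1,0)], [(0,0),(0,2),(1,0),(1,2),(1,3),(0,1),(0,3),(1,1)], [(0,0),(1,2),(1,0),(0,2),(1,1),(1,3),(0,1),(0,3)]),
([(0,0),(1,3),(1,2),(0,1),(1,1),(1,0),(0,3),(0,2)], [(0,0),(0,2),(1,0),(1,2),(0,1),(1,3),(1,1),(0,3)], [(0,0),(1,2),(1,0),(0,2),(0,3),(0,1),(1,3),(1,1)])]

/-- Tables of the 48 normalized orthomorphisms. -/
def L48 : List (List G24) := trip.map (·.1)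

lemma tbl_eq (ψ : G24 → G24) : ψ = ofT (allE.map ψ) := by
  funext x
  have hx : x = ((0:ZMod 2),(0:ZMod 4)) ∨ x = (0,1) ∨ x = (0,2) ∨ x = (0,3) ∨
      x = (1,0) ∨ x = (1,1) ∨ x = (1,2) ∨ x = (1,3) := by
    revert x; decide
  rcases hx with rfl|rfl|rfl|rfl|rfl|rfl|rfl|rfl <;> rfl

/-- Backtracking search over injective tables. -/
def step : Nat → List G24 → Bool
  | 0, pre => !decide ((List.zipWith (fun x y => -x + y) allE
        (((0,0):G24) :: pre)).Nodup) || decide ((((0,0):G24) :: pre) ∈ L48)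
  | k+1, pre => nzE.all fun a => decide (a ∈ pre) || step k (pre ++ [a])

lemma bridge : ∀ (rest pre : List G24), step rest.length pre = true →
    (∀ a ∈ rest, a ∈ nzE) → (pre ++ rest).Nodup →
    (List.zipWith (fun x y => -x + y) allE (((0,0):G24) :: (pre ++ rest))).Nodup →
    (((0,0):G24) :: (pre ++ rest)) ∈ L48 := by
  intro rest
  induction rest with
  | nil =>
    intro pre h _ _ hzip
    simp only [List.append_nil]
    simp only [List.length_nil, step, Bool.or_eq_true, Bool.not_eq_true',
      decide_eq_true_eq, decide_eq_false_iff_not] at h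
    rw [List.append_nil] at hzip
    rcases h with h | h
    · exact absurd hzip h
    · exact h
  | cons a rest ih =>
    intro pre h hmem hnd hzip
    have he : pre ++ a :: rest = (pre ++ [a]) ++ rest := by simp
    rw [he] at hnd hzip ⊢
    simp only [List.length_cons, step, List.all_eq_true, Bool.or_eq_true,
      decide_eq_true_eq] at h
    have ha := h a (hmem a (List.mem_cons_self (a := a) (l := rest)))
    have hanp : a ∉ pre := by
      intro hc
      have hd := (List.nodup_append'.mp (he ▸ hnd : (pre ++ a :: rest).Nodup)).2.2
      exact hd hc (List.mem_cons_self (a := a) (l := rest))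
    rcases ha with ha | ha
    · exact absurd ha hanp
    · exact ih (pre ++ [a]) ha (fun b hb => hmem b (List.mem_cons_of_mem a hb)) hnd hzip

lemma stepT : step 7 [] = true := by decide

lemma L2_s17 : ∀ t ∈ L48, IsNormOrtho (ofT t) := by decide

lemma normOrtho_iff (ψ : G24 → G24) : IsNormOrtho ψ ↔ ∃ t ∈ L48, ψ = ofT t := by
  constructor
  · intro hψ
    refine ⟨allE.map ψ, ?_, tbl_eq ψ⟩
    have hnz : ∀ x : G24, x ≠ 0 → ψ x ∈ nzE := fun x hx =>
      (by decide : ∀ z : G24, z ≠ 0 → z ∈ nzE) _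
        (fun h => hx (hψ.1.1 (h.trans hψ.2.1.symm)))
    have htab : allE.map ψ = ((0,0):G24) :: (([] : List G24) ++ nzE.map ψ) := by
      rw [List.nil_append, show allE = ((0,0):G24) :: nzE from rfl, List.map_cons,
        show ψ ((0,0):G24) = ((0,0):G24) from hψ.2.1]
    have h1 : allE.map (fun x => -x + ψ x) =
        List.zipWith (fun x y => -x + y) allE (allE.map ψ) := by
      rw [List.zipWith_map_right]
      exact (List.zipWith_self (f := fun a b => -a + ψ b) (l := allE)).symm
    have hzip : (List.zipWith (fun x y => -x + y) allE
        (((0,0):G24) :: (([] : List G24) ++ nzE.map ψ))).Nodup := by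
      rw [← htab, ← h1]
      exact (by decide : allE.Nodup).map hψ.2.2.1
    have hstep : step (nzE.map ψ).length [] = true := by
      rw [List.length_map]
      exact stepT
    have hmem7 : ∀ a ∈ nzE.map ψ, a ∈ nzE := by
      intro a ha
      obtain ⟨x, hx, rfl⟩ := List.mem_map.mp ha
      exact hnz x ((by decide : ∀ z : G24, z ∈ nzE → z ≠ 0) x hx)
    have hnd : (([] : List G24) ++ nzE.map ψ).Nodup := by
      rw [List.nil_append]
      exact (by decide : nzE.Nodup).map hψ.1.1
    rw [htab]
    exact bridge (nzE.map ψ) [] hstep hmem7 hnd hzip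
  · rintro ⟨t, ht, rfl⟩
    exact L2_s17 t ht

lemma L3 : ∀ p ∈ trip, p.2.1 ∈ L48 ∧ p.2.2 ∈ L48 ∧ ofT p.2.1 ≠ ofT p.2.2 ∧
    ∀ s ∈ L48, ((ofT s ≠ ofT p.1 ∧ Orthogonal (ofT p.1) (ofT s)) ↔
      (ofT s = ofT p.2.1 ∨ ofT s = ofT p.2.2)) := by decide

/-- Every normalized orthomorphism of `ℤ₂ × ℤ₄` is orthogonal to exactly two
other normalized orthomorphisms. -/
theorem two_orthogonal_mates (θ : G24 → G24) (hθ : IsNormOrtho θ) :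
    {ψ : G24 → G24 | IsNormOrtho ψ ∧ ψ ≠ θ ∧ Orthogonal θ ψ}.ncard = 2 := by
  obtain ⟨t, ht, rfl⟩ := (normOrtho_iff θ).1 hθ
  obtain ⟨p, hp, hp1⟩ := List.mem_map.1 ht
  obtain ⟨hu, hv, huv, hiff⟩ := L3 p hp
  have hset : {ψ : G24 → G24 | IsNormOrtho ψ ∧ ψ ≠ ofT t ∧ Orthogonal (ofT t) ψ}
      = {ofT p.2.1, ofT p.2.2} := by
    ext ψ
    simp only [Set.mem_setOf_eq, Set.mem_insert_iff, Set.mem_singleton_iff]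
    constructor
    · rintro ⟨hno, hne, hor⟩
      obtain ⟨s, hs, rfl⟩ := (normOrtho_iff ψ).1 hno
      rw [← hp1] at hne hor
      exact (hiff s hs).1 ⟨hne, hor⟩
    · intro h
      have hmem : ψ = ofT p.2.1 ∧ p.2.1 ∈ L48 ∨ ψ = ofT p.2.2 ∧ p.2.2 ∈ L48 := by
        rcases h with h | h
        · exact Or.inl ⟨h, hu⟩
        · exact Or.inr ⟨h, hv⟩
      rcases hmem with ⟨rfl, hm⟩ | ⟨rfl, hm⟩
      · have := (hiff _ hm).2 (Or.inl rfl)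
        rw [hp1] at this
        exact ⟨L2_s17 _ hm, this.1, this.2⟩
      · have := (hiff _ hm).2 (Or.inr rfl)
        rw [hp1] at this
        exact ⟨L2_s17 _ hm, this.1, this.2⟩
  rw [hset, Set.ncard_pair huv]
end
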